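/- (Abstract L∞-to-L² upgrade.) Let (X,μ) be a measure space, δ > 0, F ⊂ X measurable with μ(F) ≥ δ, and let g : F → [0,∞) be measurable. Let M, S be real numbers with 0 ≤ M and 0 < S, let C ≥ 1 and α ∈ (0,1), and assume that for every measurable subset F' ⊂ F with μ(F') ≥ δ/2 one has M ≤ C (sup_{F'} g)^α S^{1−α}. Then M² ≤ C' (∫_F g² dμ)^α S^{2−2α}, where C' > 0 depends only on C, α and δ. -/

import Mathlib

open MeasureTheory Real Set
open scoped ENNReal

/-- Abstract L∞-to-L² upgrade: if `M ≤ C (sup_{F'} g)^α S^{1-α}` for every sufficiently large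
measurable subset `F' ⊆ F`, then `M² ≤ C' (∫_F g² dμ)^α S^{2-2α}`, with `C'` depending only on
`C`, `α` and `δ`. -/
theorem linfty_to_l2_upgrade (δ C α : ℝ) (hδ : 0 < δ) (hC : 1 ≤ C)
    (hα : α ∈ Set.Ioo (0 : ℝ) 1) :
    ∃ C' > 0,
      ∀ (X : Type) (_ : MeasurableSpace X) (μ : Measure X) (F : Set X) (g : X → ℝ) (M S : ℝ),
        MeasurableSet F → ENNReal.ofReal δ ≤ μ F →
        Measurable g → (∀ x ∈ F, 0 ≤ g x) →
        0 ≤ M → 0 < S →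
        (∀ F' : Set X, F' ⊆ F → MeasurableSet F' → ENNReal.ofReal (δ / 2) ≤ μ F' →
          ENNReal.ofReal M ≤ ENNReal.ofReal C *
            (⨆ x ∈ F', ENNReal.ofReal (g x)) ^ α * ENNReal.ofReal S ^ (1 - α)) →
        ENNReal.ofReal (M ^ 2) ≤ ENNReal.ofReal C' *
          (∫⁻ x in F, ENNReal.ofReal (g x ^ 2) ∂μ) ^ α *
            ENNReal.ofReal S ^ (2 - 2 * α) := by
  obtain ⟨hα0, hα1⟩ := hα
  have h2δ : (0:ℝ) < 2 / δ := by positivity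
  refine ⟨C ^ 2 * (2 / δ) ^ α, by positivity, ?_⟩
  intro X mX μ F g M S hF hμF hg hg0 hM hS hyp
  set I := ∫⁻ x in F, ENNReal.ofReal (g x ^ 2) ∂μ with hIdef
  have hSpos : (0:ℝ≥0∞) < ENNReal.ofReal S := ENNReal.ofReal_pos.2 hS
  have hC' : ENNReal.ofReal (C ^ 2 * (2 / δ) ^ α)
      = ENNReal.ofReal C ^ 2 * ENNReal.ofReal (2 / δ) ^ α := by
    rw [ENNReal.ofReal_mul (by positivity), ENNReal.ofReal_pow (by linarith),
      ← ENNReal.ofReal_rpow_of_pos h2δ]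
  by_cases hItop : I = ∞
  · have : (ENNReal.ofReal (C ^ 2 * (2 / δ) ^ α)) * I ^ α *
        ENNReal.ofReal S ^ (2 - 2 * α) = ∞ := by
      rw [hItop, ENNReal.top_rpow_of_pos hα0, ENNReal.mul_top, ENNReal.top_mul]
      · exact (ENNReal.rpow_pos hSpos ENNReal.ofReal_ne_top).ne'
      · exact (ENNReal.ofReal_pos.2 (by positivity)).ne'
    rw [this]; exact le_top
  -- finite integral case
  set τ : ℝ≥0∞ := ENNReal.ofReal (2 / δ) * I with hτdef
  have hτtop : τ ≠ ∞ := ENNReal.mul_ne_top ENNReal.ofReal_ne_top hItop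
  have hfmeas : Measurable fun x => ENNReal.ofReal (g x ^ 2) :=
    ((hg.pow_const 2).ennreal_ofReal)
  set F' : Set X := F ∩ {x | ENNReal.ofReal (g x ^ 2) ≤ τ} with hF'def
  have hF'meas : MeasurableSet F' :=
    hF.inter (measurableSet_le hfmeas measurable_const)
  have hF'sub : F' ⊆ F := inter_subset_left
  -- measure of the bad set
  have hbad : μ (F \ F') ≤ ENNReal.ofReal (δ / 2) := by
    have hsetbad : F \ F' = F ∩ {x | τ < ENNReal.ofReal (g x ^ 2)} := by
      ext x; simp [hF'def, not_le, and_comm]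
    by_cases hI0 : I = 0
    · have hzero : ∀ᵐ x ∂(μ.restrict F), ENNReal.ofReal (g x ^ 2) = 0 :=
        (lintegral_eq_zero_iff hfmeas).1 hI0
      have : μ.restrict F {x | τ < ENNReal.ofReal (g x ^ 2)} = 0 := by
        rw [hτdef, hI0, mul_zero]
        exact measure_mono_null
          (fun x hx => (show (0:ENNReal) < ENNReal.ofReal (g x ^ 2) from hx).ne')
          (ae_iff.1 hzero)
      calc μ (F \ F') = μ.restrict F {x | τ < ENNReal.ofReal (g x ^ 2)} := by
            rw [Measure.restrict_apply (measurableSet_lt measurable_const hfmeas), hsetbad,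
              Set.inter_comm]
        _ ≤ ENNReal.ofReal (δ / 2) := by rw [this]; exact zero_le
    · have hτ0 : τ ≠ 0 := by
        simp only [hτdef, mul_ne_zero_iff]
        exact ⟨(ENNReal.ofReal_pos.2 h2δ).ne', hI0⟩
      have hcheb : τ * μ.restrict F {x | τ ≤ ENNReal.ofReal (g x ^ 2)} ≤ I :=
        mul_meas_ge_le_lintegral₀ hfmeas.aemeasurable τ
      have hIτ : I = τ * ENNReal.ofReal (δ / 2) := by
        rw [hτdef, mul_comm (ENNReal.ofReal (2/δ)) I, mul_assoc,
          ← ENNReal.ofReal_mul (le_of_lt h2δ)]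
        have : 2 / δ * (δ / 2) = 1 := by field_simp
        rw [this, ENNReal.ofReal_one, mul_one]
      have hmeas2 : μ.restrict F {x | τ ≤ ENNReal.ofReal (g x ^ 2)} ≤
          ENNReal.ofReal (δ / 2) := by
        rw [hIτ] at hcheb
        exact (ENNReal.mul_le_mul_iff_right hτ0 hτtop).1 hcheb
      calc μ (F \ F') = μ.restrict F {x | τ < ENNReal.ofReal (g x ^ 2)} := by
            rw [Measure.restrict_apply (measurableSet_lt measurable_const hfmeas), hsetbad,
              Set.inter_comm]
        _ ≤ μ.restrict F {x | τ ≤ ENNReal.ofReal (g x ^ 2)} :=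
            measure_mono fun x hx => le_of_lt (show τ < _ from hx)
        _ ≤ ENNReal.ofReal (δ / 2) := hmeas2
  -- F' is large
  have hF'large : ENNReal.ofReal (δ / 2) ≤ μ F' := by
    have hsplit : μ F ≤ μ F' + μ (F \ F') := by
      calc μ F ≤ μ (F' ∪ (F \ F')) := measure_mono (by
        intro x hx
        by_cases h : x ∈ F'
        · exact Or.inl h
        · exact Or.inr ⟨hx, h⟩)
        _ ≤ μ F' + μ (F \ F') := measure_union_le _ _
    have h1 : ENNReal.ofReal (δ / 2) + ENNReal.ofReal (δ / 2) ≤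
        μ F' + ENNReal.ofReal (δ / 2) := by
      calc ENNReal.ofReal (δ / 2) + ENNReal.ofReal (δ / 2)
          = ENNReal.ofReal δ := by rw [← ENNReal.ofReal_add (by positivity) (by positivity)]; ring_nf
        _ ≤ μ F := hμF
        _ ≤ μ F' + μ (F \ F') := hsplit
        _ ≤ μ F' + ENNReal.ofReal (δ / 2) := add_le_add_right hbad _
    exact (ENNReal.add_le_add_iff_right ENNReal.ofReal_ne_top).1 h1
  -- sup bound on F'
  have hsup : (⨆ x ∈ F', ENNReal.ofReal (g x)) ≤ τ ^ ((2:ℝ)⁻¹) := by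
    refine iSup₂_le fun x hx => ?_
    have hgx : 0 ≤ g x := hg0 x (hF'sub hx)
    have hle : ENNReal.ofReal (g x) ^ (2:ℝ) ≤ τ := by
      have : ENNReal.ofReal (g x ^ 2) = ENNReal.ofReal (g x) ^ 2 :=
        ENNReal.ofReal_pow hgx 2
      rw [ENNReal.rpow_two, ← this]
      exact hx.2
    calc ENNReal.ofReal (g x)
        = (ENNReal.ofReal (g x) ^ (2:ℝ)) ^ ((2:ℝ)⁻¹) := by
          rw [← ENNReal.rpow_mul]; norm_num
      _ ≤ τ ^ ((2:ℝ)⁻¹) := ENNReal.rpow_le_rpow hle (by norm_num)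
  -- apply the hypothesis
  have hMbound : ENNReal.ofReal M ≤
      ENNReal.ofReal C * (τ ^ ((2:ℝ)⁻¹)) ^ α * ENNReal.ofReal S ^ (1 - α) := by
    refine (hyp F' hF'sub hF'meas hF'large).trans ?_
    gcongr
  -- square it
  have hsq : ENNReal.ofReal (M ^ 2) ≤
      (ENNReal.ofReal C * (τ ^ ((2:ℝ)⁻¹)) ^ α * ENNReal.ofReal S ^ (1 - α)) ^ 2 := by
    rw [ENNReal.ofReal_pow hM]
    exact pow_le_pow_left' hMbound 2
  refine hsq.trans (le_of_eq ?_)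
  rw [hC']
  rw [mul_pow, mul_pow]
  have e1 : ((τ ^ ((2:ℝ)⁻¹)) ^ α) ^ 2 = τ ^ α := by
    rw [← ENNReal.rpow_natCast ((τ ^ ((2:ℝ)⁻¹)) ^ α) 2, ← ENNReal.rpow_mul, ← ENNReal.rpow_mul]
    congr 1
    push_cast
    ring
  have e2 : (ENNReal.ofReal S ^ (1 - α)) ^ 2 = ENNReal.ofReal S ^ (2 - 2 * α) := by
    rw [← ENNReal.rpow_natCast (ENNReal.ofReal S ^ (1 - α)) 2, ← ENNReal.rpow_mul]
    congr 1
    push_cast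
    ring
  rw [e1, e2, hτdef, ENNReal.mul_rpow_of_nonneg _ _ (le_of_lt hα0)]
  ring
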